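/- The wheel W₅ (5-cycle plus a hub adjacent to all five cycle vertices) admits no semi-transitive orientation; hence W₅ is not word-representable. -/

import Mathlib

/-- `o` is an orientation of the simple graph `G`: each edge gets exactly one direction. -/
def IsOrientation {V : Type*} (G : SimpleGraph V) (o : V → V → Prop) : Prop :=
  (∀ u v, o u v → G.Adj u v) ∧ (∀ u v, G.Adj u v → (o u v ∨ o v u)) ∧
    (∀ u v, o u v → ¬ o v u)

/-- An orientation (relation) is acyclic if there is no directed cycle. -/
def IsAcyclic {V : Type*} (o : V → V → Prop) : Prop :=
  Irreflexive (Relation.TransGen o)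

/-- Semi-transitive: acyclic, and every directed path `u₁ → ⋯ → u_{t+1}` together with a
shortcut edge `u₁ → u_{t+1}` forces all edges `u_i → u_j` for `i < j`. -/
def SemiTransitive {V : Type*} (o : V → V → Prop) : Prop :=
  IsAcyclic o ∧ ∀ (t : ℕ) (f : Fin (t + 1) → V),
    (∀ i : Fin t, o (f i.castSucc) (f i.succ)) →
    o (f 0) (f (Fin.last t)) →
    ∀ i j : Fin (t + 1), i < j → o (f i) (f j)

/-- The wheel graph `W_n`: cycle `C_n` plus a hub (`none`) adjacent to all rim vertices. -/
def wheelGraph (n : ℕ) : SimpleGraph (Option (Fin n)) where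
  Adj x y :=
    match x, y with
    | none, none => False
    | none, some _ => True
    | some _, none => True
    | some i, some j => (SimpleGraph.cycleGraph n).Adj i j
  symm := by
    refine ⟨?_⟩
    intro x y h
    match x, y with
    | none, some _ => trivial
    | some _, none => trivial
    | some i, some j => exact ((SimpleGraph.cycleGraph n).adj_symm h)
  loopless := by
    refine ⟨?_⟩
    intro x
    match x with
    | none => exact fun h => h
    | some i => exact fun h => (SimpleGraph.cycleGraph n).irrefl h

/-- Two letters alternate in a word: the restriction of the word to their occurrences has
no two equal consecutive letters. -/
def Alternate {V : Type*} [DecidableEq V] (w : List V) (x y : V) : Prop :=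
  (w.filter fun z => decide (z = x ∨ z = y)).Chain' (· ≠ ·)

/-- A word `w` represents a graph `G`: every vertex occurs in `w`, and two distinct
vertices alternate in `w` iff they are adjacent in `G`. -/
def Represents {V : Type*} [DecidableEq V] (w : List V) (G : SimpleGraph V) : Prop :=
  (∀ v : V, v ∈ w) ∧ ∀ x y : V, x ≠ y → (Alternate w x y ↔ G.Adj x y)

/-- A comparability graph: admits a transitive orientation. -/
def IsComparabilityGraph {V : Type*} (G : SimpleGraph V) : Prop :=
  ∃ o : V → V → Prop, IsOrientation G o ∧ Transitive o

/-- Abstract combinatorial structure of a near-triangulation: a graph together with a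
set of inner vertices such that the neighborhood of every inner vertex induces a cycle
of length equal to its degree. (Planarity is not available in Mathlib, so a
near-triangulation is abstracted by this key structural property.) -/
def IsNearTriangulation {V : Type*} [Fintype V] (G : SimpleGraph V) [DecidableRel G.Adj]
    (inner : Set V) : Prop :=
  ∀ v ∈ inner, 3 ≤ G.degree v ∧
    Nonempty ((G.induce (G.neighborSet v)) ≃g SimpleGraph.cycleGraph (G.degree v))

/-- `G` contains an induced copy of `H`. -/
def HasInducedCopy {V W : Type*} (G : SimpleGraph V) (H : SimpleGraph W) : Prop :=
  ∃ s : Set V, Nonempty ((G.induce s) ≃g H)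

open List

section AltMachinery
variable {V : Type*} [DecidableEq V]

/-- The restriction of `w` to the letters `x`, `y` alternates, starting with `x`. -/
def AltF (x y : V) : List V → Prop
  | [] => True
  | z :: t => if z = x then AltF y x t else if z = y then False else AltF x y t

lemma altF_iff (x y : V) (hxy : x ≠ y) (P : V → Bool)
    (hP : ∀ z, P z = (decide (z = x) || decide (z = y))) :
    ∀ w : List V, AltF x y w ↔
      ((w.filter P).Chain' (· ≠ ·) ∧ ∀ h, (w.filter P).head? = some h → h = x) := by
  intro w
  induction w generalizing x y with
  | nil => simp [AltF, List.Chain', List.isChain_nil]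
  | cons z t ih =>
    have hmem : ∀ h, h ∈ t.filter P → h = x ∨ h = y := by
      intro h hm
      have := of_mem_filter hm
      rw [hP] at this
      simpa using this
    by_cases hzx : z = x
    · have hPz : P z = true := by rw [hP]; simp [hzx]
      rw [show (z :: t).filter P = z :: t.filter P by simp [hPz]]
      simp only [AltF, if_pos hzx]
      rw [ih y x hxy.symm (fun u => by rw [hP u]; exact Bool.or_comm _ _)]
      simp only [List.Chain', List.isChain_cons]
      constructor
      · rintro ⟨hch, hhd⟩
        refine ⟨⟨?_, hch⟩, ?_⟩
        · intro h hh
          have := hhd h hh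
          rw [hzx, this]
          exact hxy
        · intro h hh
          simp only [head?_cons, Option.some.injEq] at hh
          rw [← hh, hzx]
      · rintro ⟨⟨hhd, hch⟩, -⟩
        refine ⟨hch, ?_⟩
        intro h hh
        rcases hmem h (List.mem_of_mem_head? hh) with h1 | h1
        · exact absurd (hzx.trans h1.symm) (hhd h hh)
        · exact h1
    · by_cases hzy : z = y
      · have hPz : P z = true := by rw [hP]; simp [hzy]
        rw [show (z :: t).filter P = z :: t.filter P by simp [hPz]]
        simp only [AltF, if_neg hzx, if_pos hzy]
        constructor
        · intro h; exact h.elim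
        · rintro ⟨-, hhd⟩
          exact absurd (hhd z rfl) hzx
      · have hPz : P z = false := by rw [hP]; simp [hzx, hzy]
        rw [show (z :: t).filter P = t.filter P by simp [hPz]]
        simp only [AltF, if_neg hzx, if_neg hzy]
        exact ih x y hxy hP

lemma alternate_iff_altF (x y : V) (hxy : x ≠ y) (w : List V) :
    Alternate w x y ↔ AltF x y w ∨ AltF y x w := by
  have hP : ∀ z : V, (decide (z = x ∨ z = y) : Bool) = (decide (z = x) || decide (z = y)) := by
    intro z; by_cases h1 : z = x <;> by_cases h2 : z = y <;> simp [h1, h2]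
  have hP' : ∀ z : V, (decide (z = x ∨ z = y) : Bool) = (decide (z = y) || decide (z = x)) := by
    intro z; rw [hP z]; exact Bool.or_comm _ _
  constructor
  · intro h
    rcases hh : (w.filter fun z => decide (z = x ∨ z = y)).head? with - | a
    · refine Or.inl ((altF_iff x y hxy _ hP w).mpr ⟨h, ?_⟩)
      intro h' hh'
      rw [hh] at hh'
      exact absurd hh' (by simp)
    · have ha : a = x ∨ a = y := by
        have := of_mem_filter (List.mem_of_mem_head? hh)
        simpa using this
      rcases ha with ha | ha
      · refine Or.inl ((altF_iff x y hxy _ hP w).mpr ⟨h, ?_⟩)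
        intro h' hh'
        rw [hh] at hh'
        cases hh'
        exact ha
      · refine Or.inr ((altF_iff y x hxy.symm _ hP' w).mpr ⟨h, ?_⟩)
        intro h' hh'
        rw [hh] at hh'
        cases hh'
        exact ha
  · rintro (h | h)
    · exact ((altF_iff x y hxy _ hP w).mp h).1
    · exact ((altF_iff y x hxy.symm _ hP' w).mp h).1

lemma altF_count (w : List V) : ∀ x y : V, x ≠ y → AltF x y w →
    ∀ n, ((w.take n).count y ≤ (w.take n).count x ∧
      (w.take n).count x ≤ (w.take n).count y + 1) := by
  induction w with
  | nil => intro x y _ _ n; simp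
  | cons z t ih =>
    intro x y hxy h n
    match n with
    | 0 => simp
    | n + 1 =>
      rw [take_succ_cons]
      by_cases hzx : z = x
      · subst hzx
        simp only [AltF, if_pos rfl] at h
        have h2 := ih y z (Ne.symm hxy) h n
        rw [List.count_cons_self, List.count_cons_of_ne hxy]
        omega
      · by_cases hzy : z = y
        · subst hzy
          simp only [AltF, if_neg hzx, if_pos rfl] at h
          exact h.elim
        · simp only [AltF, if_neg hzx, if_neg hzy] at h
          have h2 := ih x y hxy h n
          rw [List.count_cons_of_ne hzx,
            List.count_cons_of_ne hzy]
          omega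

lemma count_altF (w : List V) : ∀ x y : V, x ≠ y →
    (∀ n, ((w.take n).count y ≤ (w.take n).count x ∧
      (w.take n).count x ≤ (w.take n).count y + 1)) → AltF x y w := by
  induction w with
  | nil => intro x y _ _; trivial
  | cons z t ih =>
    intro x y hxy hc
    by_cases hzx : z = x
    · subst hzx
      simp only [AltF, if_pos rfl]
      apply ih y z (Ne.symm hxy)
      intro n
      have h2 := hc (n + 1)
      rw [take_succ_cons, List.count_cons_self, List.count_cons_of_ne hxy] at h2
      omega
    · by_cases hzy : z = y
      · subst hzy
        exfalso
        have h2 := hc 1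
        rw [show (z :: t).take 1 = [z] from rfl] at h2
        rw [List.count_cons_self, List.count_cons_of_ne hzx] at h2
        simp at h2
      · simp only [AltF, if_neg hzx, if_neg hzy]
        apply ih x y hxy
        intro n
        have h2 := hc (n + 1)
        rw [take_succ_cons, List.count_cons_of_ne hzx,
          List.count_cons_of_ne hzy] at h2
        omega

lemma altF_not_mem (w : List V) : ∀ x y : V, x ≠ y → AltF x y w → AltF y x w → x ∉ w := by
  induction w with
  | nil => intro x y _ _ _; simp
  | cons z t ih =>
    intro x y hxy h1 h2
    by_cases hzx : z = x
    · subst hzx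
      simp [AltF, hxy] at h2
    · by_cases hzy : z = y
      · subst hzy
        simp [AltF, hzx] at h1
      · simp only [AltF, if_neg hzx, if_neg hzy] at h1 h2
        intro hmem
        rcases List.mem_cons.mp hmem with hc | hc
        · exact hzx hc.symm
        · exact ih x y hxy h1 h2 hc

lemma altF_indexOf_lt (w : List V) : ∀ x y : V, x ≠ y → AltF x y w → y ∈ w →
    List.idxOf x w < List.idxOf y w := by
  induction w with
  | nil => intro x y _ _ h; simp at h
  | cons z t ih =>
    intro x y hxy h hy
    by_cases hzx : z = x
    · rw [List.idxOf_cons_eq t hzx, List.idxOf_cons_ne t (fun hc : z = y => hxy (hzx.symm.trans hc))]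
      exact Nat.succ_pos _
    · by_cases hzy : z = y
      · rw [hzy] at hzx
        simp [AltF, hzx, hzy] at h
      · simp only [AltF, if_neg hzx, if_neg hzy] at h
        have hyt : y ∈ t := by
          rcases List.mem_cons.mp hy with hc | hc
          · exact absurd hc.symm hzy
          · exact hc
        rw [List.idxOf_cons_ne t hzx, List.idxOf_cons_ne t hzy]
        exact Nat.succ_lt_succ (ih x y hxy h hyt)

end AltMachinery


lemma represents_semiTransitive {V : Type*} [DecidableEq V] (G : SimpleGraph V)
    (w : List V) (hrep : Represents w G) :
    ∃ o : V → V → Prop, IsOrientation G o ∧ SemiTransitive o := by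
  classical
  obtain ⟨hall, halt⟩ := hrep
  refine ⟨fun x y => G.Adj x y ∧ AltF x y w, ⟨fun u v h => h.1, ?_, ?_⟩, ?_, ?_⟩
  · -- totality
    intro u v ha
    rcases (alternate_iff_altF u v ha.ne w).mp ((halt u v ha.ne).mpr ha) with h | h
    · exact Or.inl ⟨ha, h⟩
    · exact Or.inr ⟨ha.symm, h⟩
  · -- asymmetry
    rintro u v ⟨ha, h1⟩ ⟨-, h2⟩
    exact altF_not_mem w u v ha.ne h1 h2 (hall u)
  · -- acyclicity
    have hidx : ∀ u v, G.Adj u v ∧ AltF u v w →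
        List.idxOf u w < List.idxOf v w :=
      fun u v h => altF_indexOf_lt w u v h.1.ne h.2 (hall v)
    intro a hcyc
    have : ∀ p q, Relation.TransGen (fun x y => G.Adj x y ∧ AltF x y w) p q →
        List.idxOf p w < List.idxOf q w := by
      intro p q h
      induction h with
      | single h' => exact hidx _ _ h'
      | tail _ h' ih => exact ih.trans (hidx _ _ h')
    exact lt_irrefl _ (this a a hcyc)
  · -- the shortcut condition
    intro t f hpath hshort i j hij
    have stepc : ∀ k : Fin t, ∀ n,
        (w.take n).count (f k.succ) ≤ (w.take n).count (f k.castSucc) :=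
      fun k n => (altF_count w _ _ (hpath k).1.ne (hpath k).2 n).1
    have stepi : ∀ k : Fin t,
        List.idxOf (f k.castSucc) w < List.idxOf (f k.succ) w :=
      fun k => altF_indexOf_lt w _ _ (hpath k).1.ne (hpath k).2 (hall _)
    have mono : ∀ j : Fin (t+1), ∀ i : Fin (t+1), i ≤ j → ∀ n,
        (w.take n).count (f j) ≤ (w.take n).count (f i) := by
      intro j
      induction j using Fin.induction with
      | zero =>
        intro i hi n
        rw [le_antisymm hi (Fin.zero_le i)]
      | succ k ih =>
        intro i hi n
        rcases eq_or_lt_of_le hi with h | h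
        · rw [h]
        · have h2 : i ≤ k.castSucc := by
            have := Fin.lt_def.mp h
            rw [Fin.val_succ] at this
            exact Fin.le_def.mpr (by rw [Fin.coe_castSucc]; omega)
          exact (stepc k n).trans (ih i h2 n)
    have monoidx : ∀ j : Fin (t+1), ∀ i : Fin (t+1), i < j →
        List.idxOf (f i) w < List.idxOf (f j) w := by
      intro j
      induction j using Fin.induction with
      | zero => intro i hi; exact absurd hi (by simp)
      | succ k ih =>
        intro i hi
        have h2 : i ≤ k.castSucc := by
          have := Fin.lt_def.mp hi
          rw [Fin.val_succ] at this
          exact Fin.le_def.mpr (by rw [Fin.coe_castSucc]; omega)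
        rcases eq_or_lt_of_le h2 with h | h
        · rw [h]; exact stepi k
        · exact (ih i h).trans (stepi k)
    have hne : f i ≠ f j := by
      intro h
      have := monoidx j i hij
      rw [h] at this
      exact lt_irrefl _ this
    have hB : ∀ n, (w.take n).count (f j) ≤ (w.take n).count (f i) ∧
        (w.take n).count (f i) ≤ (w.take n).count (f j) + 1 := by
      intro n
      refine ⟨mono j i hij.le n, ?_⟩
      have h1 : (w.take n).count (f i) ≤ (w.take n).count (f 0) :=
        mono i 0 (Fin.zero_le i) n
      have h2 : (w.take n).count (f 0) ≤ (w.take n).count (f (Fin.last t)) + 1 :=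
        (altF_count w _ _ hshort.1.ne hshort.2 n).2
      have h3 : (w.take n).count (f (Fin.last t)) ≤ (w.take n).count (f j) :=
        mono (Fin.last t) j (Fin.le_last j) n
      omega
    have haltF : AltF (f i) (f j) w := count_altF w _ _ hne hB
    exact ⟨(halt _ _ hne).mp ((alternate_iff_altF _ _ hne w).mpr (Or.inl haltF)),
      haltF⟩


open SimpleGraph

lemma wheel_adj_some {n : ℕ} {i j : Fin n} :
    (wheelGraph n).Adj (some i) (some j) ↔ (cycleGraph n).Adj i j := Iff.rfl

lemma wheel_adj_none {n : ℕ} (i : Fin n) : (wheelGraph n).Adj (some i) none := trivial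

lemma cyc3 {V : Type*} {o : V → V → Prop} (hst : SemiTransitive o) {a b c : V}
    (h1 : o a b) (h2 : o b c) (h3 : o c a) : False :=
  hst.1 a (((Relation.TransGen.single h1).tail h2).tail h3)

lemma shortcut3 {V : Type*} {o : V → V → Prop} (hst : SemiTransitive o) {a b c d : V}
    (h1 : o a b) (h2 : o b c) (h3 : o c d) (h4 : o a d) : o a c ∧ o b d := by
  have hp : ∀ i : Fin 3, o (![a,b,c,d] i.castSucc) (![a,b,c,d] i.succ) := by
    intro i; fin_cases i <;> simpa
  have h := hst.2 3 ![a,b,c,d] hp (by simpa using h4)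
  constructor
  · simpa using h 0 2 (by decide)
  · simpa using h 1 3 (by decide)


section Part1
variable {o : Option (Fin 5) → Option (Fin 5) → Prop}

/-- If a→b→d is a directed path along the rim with a,d non-adjacent, then a→hub→d. -/
lemma between (hor : IsOrientation (wheelGraph 5) o) (hst : SemiTransitive o)
    {x y z : Fin 5} (hxy : (cycleGraph 5).Adj x y) (hyz : (cycleGraph 5).Adj y z)
    (hxz : ¬ (cycleGraph 5).Adj x z)
    (oxy : o (some x) (some y)) (oyz : o (some y) (some z)) :
    o (some x) none ∧ o none (some z) := by
  obtain ⟨ho1, ho2, ho3⟩ := hor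
  have hx : o (some x) none := by
    rcases ho2 _ _ (wheel_adj_none x) with h | h
    · exact h
    exfalso
    rcases ho2 _ _ (wheel_adj_none z) with hz | hz
    · rcases ho2 _ _ (wheel_adj_none y) with hy | hy
      · exact cyc3 hst h oxy hy
      · exact cyc3 hst hy oyz hz
    · exact hxz (ho1 _ _ (shortcut3 hst h oxy oyz hz).2)
  refine ⟨hx, ?_⟩
  rcases ho2 _ _ (wheel_adj_none z) with h | h
  · exact absurd (ho1 _ _ (shortcut3 hst oxy oyz h hx).1) hxz
  · exact h

lemma mainW (hor : IsOrientation (wheelGraph 5) o) (hst : SemiTransitive o)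
    (a0 a1 a2 a3 a4 : Fin 5)
    (h01 : (cycleGraph 5).Adj a0 a1) (h12 : (cycleGraph 5).Adj a1 a2)
    (h23 : (cycleGraph 5).Adj a2 a3) (h34 : (cycleGraph 5).Adj a3 a4)
    (h40 : (cycleGraph 5).Adj a4 a0)
    (n02 : ¬ (cycleGraph 5).Adj a0 a2) (n13 : ¬ (cycleGraph 5).Adj a1 a3)
    (n24 : ¬ (cycleGraph 5).Adj a2 a4) (n30 : ¬ (cycleGraph 5).Adj a3 a0)
    (n41 : ¬ (cycleGraph 5).Adj a4 a1)
    (e01 : o (some a0) (some a1)) (e12 : o (some a1) (some a2)) : False := by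
  obtain ⟨ho1, ho2, ho3⟩ := hor
  have tote : ∀ i j : Fin 5, (cycleGraph 5).Adj i j →
      o (some i) (some j) ∨ o (some j) (some i) := fun i j h => ho2 _ _ h
  have totc : ∀ i : Fin 5, o (some i) none ∨ o none (some i) :=
    fun i => ho2 _ _ (wheel_adj_none i)
  have noAdj : ∀ {i j : Fin 5}, ¬ (cycleGraph 5).Adj i j → o (some i) (some j) → False :=
    fun hn hh => hn (ho1 _ _ hh)
  have hor' : IsOrientation (wheelGraph 5) o := ⟨ho1, ho2, ho3⟩
  obtain ⟨oac, ocd⟩ := between hor' hst h01 h12 n02 e01 e12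
  rcases tote a2 a3 h23 with ode | oed
  · obtain ⟨obc, oce⟩ := between hor' hst h12 h23 n13 e12 ode
    rcases tote a3 a4 h34 with oef | ofe
    · obtain ⟨odc, -⟩ := between hor' hst h23 h34 n24 ode oef
      exact ho3 _ _ ocd odc
    · rcases tote a4 a0 h40 with ofa | oaf
      · obtain ⟨-, ocb⟩ := between hor' hst h40 h01 n41 ofa e01
        exact ho3 _ _ obc ocb
      · rcases totc a4 with ofc | ocf
        · exact noAdj (fun h => n24 h.symm) (shortcut3 hst ofc ocd ode ofe).1
        · exact noAdj (fun h => n41 h.symm) (shortcut3 hst e01 obc ocf oaf).2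
  · rcases tote a3 a4 h34 with oef | ofe
    · rcases tote a4 a0 h40 with ofa | oaf
      · obtain ⟨-, oca⟩ := between hor' hst h34 h40 n30 oef ofa
        exact ho3 _ _ oac oca
      · rcases totc a3 with oec | oce
        · rcases totc a1 with obc2 | ocb2
          · rcases totc a4 with ofc2 | ocf2
            · exact noAdj (fun h => n24 h.symm) (shortcut3 hst oef ofc2 ocd oed).2
            · exact noAdj (fun h => n41 h.symm) (shortcut3 hst e01 obc2 ocf2 oaf).2
          · exact noAdj (fun h => n13 h.symm) (shortcut3 hst oec ocb2 e12 oed).1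
        · exact noAdj (fun h => n30 h.symm) (shortcut3 hst oac oce oef oaf).1
    · rcases tote a4 a0 h40 with ofa | oaf
      · obtain ⟨ofc, ocb⟩ := between hor' hst h40 h01 n41 ofa e01
        rcases totc a3 with oec | oce
        · exact noAdj (fun h => n13 h.symm) (shortcut3 hst oec ocb e12 oed).1
        · exact noAdj (fun h => n30 h.symm) (shortcut3 hst ofa oac oce ofe).2
      · obtain ⟨-, oce⟩ := between hor' hst h40.symm h34.symm (fun h => n30 h.symm) oaf ofe
        obtain ⟨ofc, -⟩ := between hor' hst h34.symm h23.symm (fun h => n24 h.symm) ofe oed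
        rcases totc a1 with obc | ocb
        · exact noAdj n13 (shortcut3 hst obc oce oed e12).1
        · exact noAdj n41 (shortcut3 hst oaf ofc ocb e01).2

theorem W5aux_part1 : ¬ ∃ o : Option (Fin 5) → Option (Fin 5) → Prop,
    IsOrientation (wheelGraph 5) o ∧ SemiTransitive o := by
  rintro ⟨o, hor, hst⟩
  have ho2 := hor.2.1
  have c1 : ∀ a : Fin 5, (cycleGraph 5).Adj a (a+1) := by decide
  set Q : Fin 5 → Prop := fun i => o (some i) (some (i+1)) with hQdef
  have e0 : (0:Fin 5) + 1 = 1 := by decide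
  have e1 : (1:Fin 5) + 1 = 2 := by decide
  have e2 : (2:Fin 5) + 1 = 3 := by decide
  have e3 : (3:Fin 5) + 1 = 4 := by decide
  have e4 : (4:Fin 5) + 1 = 0 := by decide
  have pair : ∀ i : Fin 5, (Q i ↔ Q (i+1)) →
      ∃ i : Fin 5, (Q i ∧ Q (i+1)) ∨ (¬ Q i ∧ ¬ Q (i+1)) := by
    intro i h
    rcases em (Q i) with h'|h'
    · exact ⟨i, Or.inl ⟨h', h.mp h'⟩⟩
    · exact ⟨i, Or.inr ⟨h', fun h2 => h' (h.mpr h2)⟩⟩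
  have key : ∃ i : Fin 5, (Q i ∧ Q (i+1)) ∨ (¬ Q i ∧ ¬ Q (i+1)) := by
    by_contra hc
    have hne : ∀ i : Fin 5, ¬ (Q i ↔ Q (i+1)) := fun i h => hc (pair i h)
    have g : ∀ i : Fin 5, Q (i+1) ↔ ¬ Q i := by
      intro i
      rcases em (Q i) with h|h <;> rcases em (Q (i+1)) with h2|h2
      · exact absurd (Iff.intro (fun _ => h2) (fun _ => h)) (hne i)
      · simp [h, h2]
      · simp [h, h2]
      · exact absurd (Iff.intro (fun x => absurd x h) (fun x => absurd x h2)) (hne i)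
    have g0 := g 0; have g1 := g 1; have g2 := g 2; have g3 := g 3; have g4 := g 4
    rw [e0] at g0; rw [e1] at g1; rw [e2] at g2; rw [e3] at g3; rw [e4] at g4
    tauto
  obtain ⟨i, hi⟩ := key
  rcases hi with ⟨q1, q2⟩ | ⟨q1, q2⟩
  · exact mainW hor hst i (i+1) (i+1+1) (i+1+1+1) (i+1+1+1+1)
      (c1 i) (c1 _) (c1 _) (c1 _)
      ((by decide : ∀ x : Fin 5, (cycleGraph 5).Adj (x+1+1+1+1) x) i)
      ((by decide : ∀ x : Fin 5, ¬ (cycleGraph 5).Adj x (x+1+1)) i)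
      ((by decide : ∀ x : Fin 5, ¬ (cycleGraph 5).Adj (x+1) (x+1+1+1)) i)
      ((by decide : ∀ x : Fin 5, ¬ (cycleGraph 5).Adj (x+1+1) (x+1+1+1+1)) i)
      ((by decide : ∀ x : Fin 5, ¬ (cycleGraph 5).Adj (x+1+1+1) x) i)
      ((by decide : ∀ x : Fin 5, ¬ (cycleGraph 5).Adj (x+1+1+1+1) (x+1)) i)
      q1 q2
  · have r1 : o (some (i+1)) (some i) := (ho2 _ _ (wheel_adj_some.mpr (c1 i))).resolve_left q1
    have r2 : o (some (i+1+1)) (some (i+1)) := (ho2 _ _ (wheel_adj_some.mpr (c1 (i+1)))).resolve_left q2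
    exact mainW hor hst (i+1+1) (i+1) i (i+1+1+1+1) (i+1+1+1)
      ((by decide : ∀ x : Fin 5, (cycleGraph 5).Adj (x+1+1) (x+1)) i)
      ((by decide : ∀ x : Fin 5, (cycleGraph 5).Adj (x+1) x) i)
      ((by decide : ∀ x : Fin 5, (cycleGraph 5).Adj x (x+1+1+1+1)) i)
      ((by decide : ∀ x : Fin 5, (cycleGraph 5).Adj (x+1+1+1+1) (x+1+1+1)) i)
      ((by decide : ∀ x : Fin 5, (cycleGraph 5).Adj (x+1+1+1) (x+1+1)) i)
      ((by decide : ∀ x : Fin 5, ¬ (cycleGraph 5).Adj (x+1+1) x) i)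
      ((by decide : ∀ x : Fin 5, ¬ (cycleGraph 5).Adj (x+1) (x+1+1+1+1)) i)
      ((by decide : ∀ x : Fin 5, ¬ (cycleGraph 5).Adj x (x+1+1+1)) i)
      ((by decide : ∀ x : Fin 5, ¬ (cycleGraph 5).Adj (x+1+1+1+1) (x+1+1)) i)
      ((by decide : ∀ x : Fin 5, ¬ (cycleGraph 5).Adj (x+1+1+1) (x+1)) i)
      r2 r1
end Part1

/-- the wheel `W₅` admits no semi-transitive orientation; hence `W₅` is
not word-representable. -/
theorem W5_not_semiTransitive_not_wordRepresentable :
    (¬ ∃ o : Option (Fin 5) → Option (Fin 5) → Prop,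
        IsOrientation (wheelGraph 5) o ∧ SemiTransitive o) ∧
      ¬ ∃ w : List (Option (Fin 5)), Represents w (wheelGraph 5) := by
  refine ⟨W5aux_part1, ?_⟩
  rintro ⟨w, hw⟩
  exact W5aux_part1 (represents_semiTransitive _ w hw)
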